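/- Let d_f be μ̄-strongly convex and L̄-smooth with μ̄ > 0, and d_h convex. For ρ > 0, the Peaceman–Rachford operator T = refl_{ρ d_h} ∘ refl_{ρ d_f} is Lipschitz continuous with constant λ = max{ |1 − ρL̄|/(1 + ρL̄), |1 − ρμ̄|/(1 + ρμ̄) } < 1. -/

import Mathlib

def IsSmoothFn {p : ℕ} (L : ℝ) (f : EuclideanSpace ℝ (Fin p) → ℝ) : Prop :=
  ∃ f' : EuclideanSpace ℝ (Fin p) → EuclideanSpace ℝ (Fin p),
    (∀ x, HasGradientAt f (f' x) x) ∧ LipschitzWith L.toNNReal f'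

/-- `P` is the proximal map of `g` with parameter `ρ`: `P x` minimizes
`y ↦ g y + ‖y - x‖² / (2ρ)`. -/
def IsProxOf {p : ℕ} (ρ : ℝ) (g : EuclideanSpace ℝ (Fin p) → ℝ)
    (P : EuclideanSpace ℝ (Fin p) → EuclideanSpace ℝ (Fin p)) : Prop :=
  ∀ x, IsMinOn (fun y => g y + ‖y - x‖ ^ 2 / (2 * ρ)) Set.univ (P x)


open Set

variable {E : Type*} [NormedAddCommGroup E] [InnerProductSpace ℝ E] [CompleteSpace E]

local notation "⟪" x ", " y "⟫" => @inner ℝ _ _ x y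

/-- derivative along a line -/
lemma PR.line_hasDerivAt (F : E → ℝ) (F' : E → E) (hF : ∀ x, HasGradientAt F (F' x) x)
    (x u : E) (t : ℝ) :
    HasDerivAt (fun s : ℝ => F (x + s • u)) ⟪F' (x + t • u), u⟫ t := by
  have hline : HasDerivAt (fun s : ℝ => x + s • u) u t := by
    simpa using ((hasDerivAt_id t).smul_const u).const_add x
  have := (hF (x + t • u)).hasFDerivAt.comp_hasDerivAt t hline
  exact this

/-- Gradient inequality for convex differentiable functions. -/
lemma PR.grad_ineq (F : E → ℝ) (F' : E → E) (hF : ∀ x, HasGradientAt F (F' x) x)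
    (hc : ConvexOn ℝ univ F) (x y : E) :
    F x + ⟪F' x, y - x⟫ ≤ F y := by
  have hline : ∀ t : ℝ, HasDerivAt (fun s : ℝ => F (x + s • (y - x)))
      ⟪F' (x + t • (y - x)), y - x⟫ t := PR.line_hasDerivAt F F' hF x (y - x)
  set h : ℝ → ℝ := fun s => F (x + s • (y - x)) with hh
  have hconv : ConvexOn ℝ univ h := by
    have := hc.comp_affineMap (AffineMap.lineMap x y : ℝ →ᵃ[ℝ] E)
    have heq : h = F ∘ (AffineMap.lineMap x y : ℝ →ᵃ[ℝ] E) := by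
      funext s
      simp [h, AffineMap.lineMap_apply_module]
      congr 1
      module
    rw [heq]
    simpa using this
  have h0 := hconv.le_slope_of_hasDerivAt (mem_univ (0:ℝ)) (mem_univ (1:ℝ)) one_pos
      (by simpa using hline 0)
  have : h 0 = F x := by simp [h]
  have h1 : h 1 = F y := by simp [h]
  rw [slope_def_field] at h0
  simp [this, h1] at h0
  linarith [h0]

/-- Monotone gradient implies convex. -/
lemma PR.convex_of_monotone_grad (F : E → ℝ) (F' : E → E) (hF : ∀ x, HasGradientAt F (F' x) x)
    (hm : ∀ x y, 0 ≤ ⟪F' x - F' y, x - y⟫) : ConvexOn ℝ univ F := by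
  refine ⟨convex_univ, fun x _ y _ a b ha hb hab => ?_⟩
  set u := y - x with hu
  set h : ℝ → ℝ := fun s => F (x + s • u) with hh
  have hd : ∀ t, HasDerivAt h ⟪F' (x + t • u), u⟫ t := PR.line_hasDerivAt F F' hF x u
  have hdiff : Differentiable ℝ h := fun t => (hd t).differentiableAt
  have hderiv : deriv h = fun t => ⟪F' (x + t • u), u⟫ := funext fun t => (hd t).deriv
  have hmono : Monotone (deriv h) := by
    rw [hderiv]
    intro s t hst
    rcases eq_or_lt_of_le hst with rfl | hst
    · exact le_rfl
    · have h1 := hm (x + t • u) (x + s • u)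
      have h2 : (x + t • u) - (x + s • u) = (t - s) • u := by module
      rw [h2, inner_sub_left, real_inner_smul_right, real_inner_smul_right] at h1
      simp only
      nlinarith [h1]
  have hcv : ConvexOn ℝ univ h := hmono.convexOn_univ_of_deriv hdiff
  have key := hcv.2 (mem_univ (0:ℝ)) (mem_univ (1:ℝ)) ha hb hab
  have e0 : h 0 = F x := by simp [hh]
  have e1 : h 1 = F y := by simp [hh, hu]
  have e2 : h (a • (0:ℝ) + b • 1) = F (a • x + b • y) := by
    have harg : x + (a • (0:ℝ) + b • 1) • u = a • x + b • y := by
      simp only [hu, smul_zero, zero_add, smul_eq_mul, mul_one]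
      have hba : a = 1 - b := by linarith
      rw [hba]; module
    exact congrArg F harg
  rw [e0, e1, e2] at key
  exact key

lemma PR.hasGradientAt_combo (F : E → ℝ) (g x : E) (h : HasGradientAt F g x) (a c : ℝ) :
    HasGradientAt (fun y => a * F y + c * ‖y‖ ^ 2) (a • g + (2 * c) • x) x := by
  have h1 : HasFDerivAt (fun y : E => ‖y‖ ^ 2) (2 • (innerSL ℝ x)) x :=
    (hasStrictFDerivAt_norm_sq x).hasFDerivAt
  have h2 := (h.hasFDerivAt.const_mul a).add (h1.const_mul c)
  rw [hasGradientAt_iff_hasFDerivAt]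
  refine h2.congr_fderiv ?_
  ext w
  simp [InnerProductSpace.toDual_apply_apply, inner_add_left, real_inner_smul_left]
  ring

lemma PR.hasGradientAt_sq_dist (z x : E) {ρ : ℝ} (hρ : ρ ≠ 0) :
    HasGradientAt (fun y => ‖y - z‖ ^ 2 / (2 * ρ)) (ρ⁻¹ • (x - z)) x := by
  have h1 : HasFDerivAt (fun y : E => ‖y - z‖ ^ 2) (2 • (innerSL ℝ (x - z))) x := by
    have := ((hasFDerivAt_id x).sub_const z).norm_sq
    simpa using this
  have h2 := h1.const_mul ((2 * ρ)⁻¹)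
  simp_rw [div_eq_inv_mul]
  rw [hasGradientAt_iff_hasFDerivAt]
  refine h2.congr_fderiv ?_
  ext w
  simp [InnerProductSpace.toDual_apply_apply, real_inner_smul_left]
  field_simp

lemma PR.prox_grad_eq {df : E → ℝ} {f' : E → E} (hf : ∀ x, HasGradientAt df (f' x) x)
    {ρ : ℝ} (hρ : 0 < ρ) {P : E → E}
    (hP : ∀ x, IsMinOn (fun y => df y + ‖y - x‖ ^ 2 / (2 * ρ)) univ (P x)) (z : E) :
    z = P z + ρ • f' (P z) := by
  have hq := PR.hasGradientAt_sq_dist z (P z) (ne_of_gt hρ)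
  have hgrad : HasFDerivAt (fun y => df y + ‖y - z‖ ^ 2 / (2 * ρ))
      (InnerProductSpace.toDual ℝ E (f' (P z) + ρ⁻¹ • (P z - z))) (P z) := by
    have := (hf (P z)).hasFDerivAt.add hq.hasFDerivAt
    rwa [← map_add] at this
  have hmin : IsLocalMin (fun y => df y + ‖y - z‖ ^ 2 / (2 * ρ)) (P z) :=
    (hP z).isLocalMin (by simp)
  have hz := hmin.hasFDerivAt_eq_zero hgrad
  have hg : f' (P z) + ρ⁻¹ • (P z - z) = 0 := by
    have := congrArg (InnerProductSpace.toDual ℝ E).symm hz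
    simpa using this
  have hfp : f' (P z) = ρ⁻¹ • (z - P z) := by
    have : f' (P z) = -(ρ⁻¹ • (P z - z)) := by
      rw [eq_neg_iff_add_eq_zero]; exact hg
    rw [this]; rw [← smul_neg]; congr 1; abel
  rw [hfp, smul_smul, mul_inv_cancel₀ (ne_of_gt hρ), one_smul]
  abel

/-- Variational inequality for the prox of a convex function. -/
lemma PR.prox_vi {dh : E → ℝ} (hconv : ConvexOn ℝ univ dh) {ρ : ℝ} (hρ : 0 < ρ) {P : E → E}
    (hP : ∀ x, IsMinOn (fun y => dh y + ‖y - x‖ ^ 2 / (2 * ρ)) univ (P x)) (x y : E) :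
    ⟪x - P x, y - P x⟫ ≤ ρ * (dh y - dh (P x)) := by
  set q := P x with hq
  have key : ∀ t : ℝ, 0 < t → t ≤ 1 →
      0 ≤ 2 * ρ * (dh y - dh q) + 2 * ⟪q - x, y - q⟫ + t * ‖y - q‖ ^ 2 := by
    intro t ht0 ht1
    have hmin := (hP x) (mem_univ (q + t • (y - q)))
    simp only at hmin
    have hcv : dh (q + t • (y - q)) ≤ (1 - t) * dh q + t * dh y := by
      have := hconv.2 (mem_univ q) (mem_univ y) (by linarith : (0:ℝ) ≤ 1 - t) (le_of_lt ht0)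
        (by ring)
      have harg : (1 - t) • q + t • y = q + t • (y - q) := by module
      rw [harg] at this
      simpa using this
    have hnorm : ‖q + t • (y - q) - x‖ ^ 2
        = ‖q - x‖ ^ 2 + 2 * t * ⟪q - x, y - q⟫ + t ^ 2 * ‖y - q‖ ^ 2 := by
      have harg : q + t • (y - q) - x = (q - x) + t • (y - q) := by module
      rw [harg, norm_add_sq_real, real_inner_smul_right, norm_smul]
      simp [mul_pow]
      ring
    have hρ2 : 0 < 2 * ρ := by linarith
    have hineq : dh q + ‖q - x‖ ^ 2 / (2 * ρ)
        ≤ (1 - t) * dh q + t * dh y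
          + (‖q - x‖ ^ 2 + 2 * t * ⟪q - x, y - q⟫ + t ^ 2 * ‖y - q‖ ^ 2) / (2 * ρ) := by
      calc dh q + ‖q - x‖ ^ 2 / (2 * ρ)
          ≤ dh (q + t • (y - q)) + ‖q + t • (y - q) - x‖ ^ 2 / (2 * ρ) := hmin
        _ ≤ _ := by rw [hnorm]; exact add_le_add_left hcv _
    field_simp at hineq
    nlinarith [hineq, ht0, mul_pos ht0 ht0, mul_pos (mul_pos ht0 ht0) hρ2]
  -- limit as t → 0
  by_contra hcon
  push_neg at hcon
  set C := 2 * ρ * (dh y - dh q) + 2 * ⟪q - x, y - q⟫ with hC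
  have hCneg : C < 0 := by
    have : ⟪x - q, y - q⟫ = -⟪q - x, y - q⟫ := by
      rw [← inner_neg_left]; congr 1; abel
    rw [this] at hcon
    nlinarith [hcon]
  set B := ‖y - q‖ ^ 2 with hB
  have hB0 : 0 ≤ B := by positivity
  rcases eq_or_lt_of_le hB0 with hB1 | hB1
  · have := key 1 one_pos le_rfl
    rw [← hB1] at this
    simp at this
    linarith
  · set t := min 1 (-C / (2 * B)) with ht
    have ht0 : 0 < t := lt_min one_pos (div_pos (by linarith) (by linarith))
    have ht1 : t ≤ 1 := min_le_left _ _
    have := key t ht0 ht1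
    have htB : t * B ≤ -C / 2 := by
      calc t * B ≤ (-C / (2 * B)) * B := by
            apply mul_le_mul_of_nonneg_right (min_le_right _ _) hB0
        _ = -C / 2 := by field_simp
    linarith

set_option linter.unusedSectionVars false

lemma PR.refl_nonexpansive {dh : E → ℝ} (hconv : ConvexOn ℝ univ dh) {ρ : ℝ} (hρ : 0 < ρ)
    {P : E → E} (hP : ∀ x, IsMinOn (fun y => dh y + ‖y - x‖ ^ 2 / (2 * ρ)) univ (P x))
    (z w : E) : ‖(2 • P z - z) - (2 • P w - w)‖ ≤ ‖z - w‖ := by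
  have h1 := PR.prox_vi hconv hρ hP z (P w)
  have h2 := PR.prox_vi hconv hρ hP w (P z)
  -- firm nonexpansiveness
  have firm : ‖P z - P w‖ ^ 2 ≤ ⟪z - w, P z - P w⟫ := by
    have hsum : ⟪z - P z, P w - P z⟫ + ⟪w - P w, P z - P w⟫ ≤ 0 := by linarith
    have e1 : ⟪z - P z, P w - P z⟫ = -⟪z - P z, P z - P w⟫ := by
      rw [← inner_neg_right]; congr 1; abel
    have e2 : ⟪z - P z, P z - P w⟫ = ⟪z, P z - P w⟫ - ⟪P z, P z - P w⟫ := by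
      rw [← inner_sub_left]
    have e3 : ⟪w - P w, P z - P w⟫ = ⟪w, P z - P w⟫ - ⟪P w, P z - P w⟫ := by
      rw [← inner_sub_left]
    have e4 : ⟪P z, P z - P w⟫ - ⟪P w, P z - P w⟫ = ‖P z - P w‖ ^ 2 := by
      rw [← inner_sub_left, real_inner_self_eq_norm_sq]
    have e5 : ⟪z - w, P z - P w⟫ = ⟪z, P z - P w⟫ - ⟪w, P z - P w⟫ := by
      rw [← inner_sub_left]
    linarith [hsum, e1.symm ▸ hsum]
  have expand : ‖(2 • P z - z) - (2 • P w - w)‖ ^ 2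
      = 4 * ‖P z - P w‖ ^ 2 - 4 * ⟪z - w, P z - P w⟫ + ‖z - w‖ ^ 2 := by
    have harg : (2 • P z - z) - (2 • P w - w) = (2:ℝ) • (P z - P w) - (z - w) := by
      push_cast [two_smul]; module
    rw [harg, norm_sub_sq_real, norm_smul, real_inner_smul_left, real_inner_comm]
    simp [mul_pow]
    ring
  have hsq : ‖(2 • P z - z) - (2 • P w - w)‖ ^ 2 ≤ ‖z - w‖ ^ 2 := by
    rw [expand]; linarith
  exact (pow_le_pow_iff_left₀ (norm_nonneg _) (norm_nonneg _) two_ne_zero).mp hsq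

lemma PR.cocoercive {df : E → ℝ} {f' : E → E} (hf : ∀ x, HasGradientAt df (f' x) x)
    {μ L : ℝ} (hμ : 0 < μ) (hμL : μ ≤ L)
    (hsc : StrongConvexOn univ μ df) (hlip : ∀ a b : E, ‖f' a - f' b‖ ≤ L * ‖a - b‖)
    (x y : E) :
    ‖f' x - f' y‖ ^ 2 + μ * L * ‖x - y‖ ^ 2 ≤ (L + μ) * ⟪f' x - f' y, x - y⟫ := by
  -- the shifted function g = df - μ/2 ‖·‖² and its gradient G
  set g : E → ℝ := fun v => 1 * df v + (-(μ/2)) * ‖v‖ ^ 2 with hgdef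
  set G : E → E := fun v => f' v - μ • v with hGdef
  have hg : ∀ v, HasGradientAt g (G v) v := by
    intro v
    have h := PR.hasGradientAt_combo df (f' v) v (hf v) 1 (-(μ/2))
    have : (1:ℝ) • f' v + (2 * (-(μ/2))) • v = G v := by
      rw [hGdef]; simp only; module
    rwa [this] at h
  have hgconv : ConvexOn ℝ univ g := by
    have h1 := strongConvexOn_iff_convex.mp hsc
    have : (fun v => df v - μ / 2 * ‖v‖ ^ 2) = g := by
      funext v; rw [hgdef]; ring
    rwa [this] at h1
  -- monotonicity of G
  have hGmono : ∀ a b : E, 0 ≤ ⟪G a - G b, a - b⟫ := by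
    intro a b
    have c1 := PR.grad_ineq g G hg hgconv a b
    have c2 := PR.grad_ineq g G hg hgconv b a
    have e1 : ⟪G a, a - b⟫ = -⟪G a, b - a⟫ := by rw [← inner_neg_right]; congr 1; abel
    have e2 : ⟪G b, a - b⟫ = -⟪G b, b - a⟫ := by rw [← inner_neg_right]; congr 1; abel
    rw [inner_sub_left, e1]
    rw [e2] at c2
    linarith
  -- Lipschitz-type bound on G along inner products
  have hGlip : ∀ a b : E, ⟪G a - G b, a - b⟫ ≤ (L - μ) * ‖a - b‖ ^ 2 := by
    intro a b
    have e : G a - G b = (f' a - f' b) - μ • (a - b) := by rw [hGdef]; simp only; module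
    rw [e, inner_sub_left, real_inner_smul_left, real_inner_self_eq_norm_sq]
    have := real_inner_le_norm (f' a - f' b) (a - b)
    have h2 := hlip a b
    nlinarith [norm_nonneg (a - b), norm_nonneg (f' a - f' b)]
  rcases eq_or_lt_of_le hμL with rfl | hlt
  · -- μ = L
    have h1 : 0 ≤ ⟪G x - G y, x - y⟫ := hGmono x y
    have e : G x - G y = (f' x - f' y) - μ • (x - y) := by rw [hGdef]; simp only; module
    rw [e, inner_sub_left, real_inner_smul_left, real_inner_self_eq_norm_sq] at h1
    have h2 := hlip x y
    nlinarith [norm_nonneg (x - y), norm_nonneg (f' x - f' y), real_inner_le_norm (f' x - f' y) (x - y)]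
  · set K := L - μ with hK
    have hK0 : 0 < K := by linarith
    -- ψ = K/2 ‖·‖² - g is convex
    set ψ : E → ℝ := fun v => (-1) * g v + (K/2) * ‖v‖ ^ 2 with hψdef
    set Ψ : E → E := fun v => K • v - G v with hΨdef
    have hψ : ∀ v, HasGradientAt ψ (Ψ v) v := by
      intro v
      have h := PR.hasGradientAt_combo g (G v) v (hg v) (-1) (K/2)
      have : (-1:ℝ) • G v + (2 * (K/2)) • v = Ψ v := by rw [hΨdef]; simp only; module
      rwa [this] at h
    have hψconv : ConvexOn ℝ univ ψ := by
      apply PR.convex_of_monotone_grad ψ Ψ hψ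
      intro a b
      have e : Ψ a - Ψ b = K • (a - b) - (G a - G b) := by rw [hΨdef]; simp only; module
      rw [e, inner_sub_left, real_inner_smul_left, real_inner_self_eq_norm_sq]
      have := hGlip a b
      linarith
    -- descent lemma for g
    have hdesc : ∀ a b : E, g b ≤ g a + ⟪G a, b - a⟫ + K/2 * ‖b - a‖ ^ 2 := by
      intro a b
      have c1 := PR.grad_ineq ψ Ψ hψ hψconv a b
      have e1 : ⟪Ψ a, b - a⟫ = K * ⟪a, b - a⟫ - ⟪G a, b - a⟫ := by
        rw [hΨdef]; simp only; rw [inner_sub_left, real_inner_smul_left]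
      have e2 : ‖b‖ ^ 2 = ‖a‖ ^ 2 + 2 * ⟪a, b - a⟫ + ‖b - a‖ ^ 2 := by
        have : b = a + (b - a) := by abel
        nth_rewrite 1 [this]
        rw [norm_add_sq_real]
      simp only [hψdef] at c1
      rw [e1] at c1
      nlinarith [c1]
    -- lower bound with gradient norm
    have hlow : ∀ a b : E, g a + ⟪G a, b - a⟫ + (1/K) * ‖G b - G a‖ ^ 2 / 2 ≤ g b := by
      intro a b
      set e : E := G b - G a with hedef
      set z : E := b - (1/K) • e with hzdef
      have c1 := PR.grad_ineq g G hg hgconv a z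
      have c2 := hdesc b z
      have ez1 : z - a = (b - a) - (1/K) • e := by rw [hzdef]; abel
      have ez2 : z - b = -((1/K) • e) := by rw [hzdef]; abel
      have i1 : ⟪G a, z - a⟫ = ⟪G a, b - a⟫ - (1/K) * ⟪G a, e⟫ := by
        rw [ez1, inner_sub_right, real_inner_smul_right]
      have i2 : ⟪G b, z - b⟫ = -((1/K) * ⟪G b, e⟫) := by
        rw [ez2, inner_neg_right, real_inner_smul_right]
      have i3 : ‖z - b‖ ^ 2 = (1/K)^2 * ‖e‖ ^ 2 := by
        rw [ez2, norm_neg, norm_smul]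
        simp [mul_pow, abs_of_pos (by positivity : (0:ℝ) < 1/K)]
      have i4 : ⟪G b, e⟫ - ⟪G a, e⟫ = ‖e‖ ^ 2 := by
        rw [← inner_sub_left, ← hedef, real_inner_self_eq_norm_sq]
      rw [i1] at c1
      rw [i2, i3] at c2
      have hKne : K ≠ 0 := ne_of_gt hK0
      have : g a + ⟪G a, b - a⟫ - (1/K) * ⟪G a, e⟫ ≤ g b - (1/K) * ⟪G b, e⟫ + K/2 * ((1/K)^2 * ‖e‖^2) := by
        linarith
      have hsimp : K/2 * ((1/K)^2 * ‖e‖^2) = (1/K) * ‖e‖^2 / 2 := by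
        field_simp
      rw [hsimp] at this
      have i5 : (1/K) * ⟪G b, e⟫ - (1/K) * ⟪G a, e⟫ = (1/K) * ‖e‖ ^ 2 := by
        rw [← mul_sub, i4]
      linarith [this, i5]
    -- cocoercivity
    have hcoco : (1/K) * ‖G x - G y‖ ^ 2 ≤ ⟪G x - G y, x - y⟫ := by
      have c1 := hlow x y
      have c2 := hlow y x
      have i1 : ⟪G y, x - y⟫ = -⟪G y, y - x⟫ := by rw [← inner_neg_right]; congr 1; abel
      have i2 : ‖G x - G y‖ = ‖G y - G x‖ := by rw [← norm_neg]; congr 1; abel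
      have i3 : ⟪G x, y - x⟫ = -⟪G x, x - y⟫ := by rw [← inner_neg_right]; congr 1; abel
      rw [inner_sub_left, i1, i2]
      rw [i3] at c1
      rw [i2] at c2
      linarith [c1, c2]
    -- conclude
    have e : G x - G y = (f' x - f' y) - μ • (x - y) := by rw [hGdef]; simp only; module
    have hA : ‖(f' x - f' y) - μ • (x - y)‖ ^ 2
        = ‖f' x - f' y‖ ^ 2 - 2 * μ * ⟪f' x - f' y, x - y⟫ + μ ^ 2 * ‖x - y‖ ^ 2 := by
      rw [norm_sub_sq_real, real_inner_smul_right, norm_smul]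
      simp [mul_pow, abs_of_pos hμ]
      ring
    have hB : ⟪(f' x - f' y) - μ • (x - y), x - y⟫
        = ⟪f' x - f' y, x - y⟫ - μ * ‖x - y‖ ^ 2 := by
      rw [inner_sub_left, real_inner_smul_left, real_inner_self_eq_norm_sq]
    rw [e, hA, hB] at hcoco
    rw [one_div, inv_mul_le_iff₀ hK0] at hcoco
    simp only [hK] at hcoco
    nlinarith [hcoco]

lemma PR.key_alg (a b s μ L ρ lam : ℝ) (ha : 0 ≤ a) (hρ : 0 < ρ) (hμ : 0 < μ) (hμL : μ ≤ L)
    (hC : b + μ * L * a ≤ (L + μ) * s) (hcs : s ^ 2 ≤ a * b) (hsL : s ≤ L * a)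
    (h1 : (1 - ρ*μ)^2 ≤ lam^2 * (1 + ρ*μ)^2) (h2 : (1 - ρ*L)^2 ≤ lam^2 * (1 + ρ*L)^2)
    (hlam1 : lam ≤ 1) (hlam0 : 0 ≤ lam) :
    a - 2*ρ*s + ρ^2*b ≤ lam^2 * (a + 2*ρ*s + ρ^2*b) := by
  have hsμ : μ * a ≤ s := by
    have hCa := mul_le_mul_of_nonneg_left hC ha
    nlinarith [hCa, hcs, hsL, mul_nonneg (sub_nonneg.mpr hμL) ha]
  have h1m : 0 ≤ 1 - lam ^ 2 := by nlinarith
  have hCm : 0 ≤ (L + μ) * s - μ * L * a - b := by linarith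
  have t1 : 0 ≤ (1 - lam ^ 2) * (ρ ^ 2 * ((L + μ) * s - μ * L * a - b)) :=
    mul_nonneg h1m (mul_nonneg (sq_nonneg ρ) hCm)
  rcases le_or_gt 0 (2 * (1 + lam^2) + ρ * (L + μ) * (lam^2 - 1)) with hB | hB
  · have t2 : 0 ≤ (ρ * (s - μ * a)) * (2 * (1 + lam^2) + ρ * (L + μ) * (lam^2 - 1)) :=
      mul_nonneg (mul_nonneg hρ.le (by linarith)) hB
    have t3 : 0 ≤ a * (lam^2 * (1 + ρ*μ)^2 - (1 - ρ*μ)^2) := mul_nonneg ha (by linarith)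
    nlinarith [t1, t2, t3]
  · have t2 : 0 ≤ (ρ * (L * a - s)) * (-(2 * (1 + lam^2) + ρ * (L + μ) * (lam^2 - 1))) :=
      mul_nonneg (mul_nonneg hρ.le (by linarith)) (by linarith)
    have t3 : 0 ≤ a * (lam^2 * (1 + ρ*L)^2 - (1 - ρ*L)^2) := mul_nonneg ha (by linarith)
    nlinarith [t1, t2, t3]


theorem peaceman_rachford_contraction {p : ℕ}
    (df dh : EuclideanSpace ℝ (Fin p) → ℝ)
    (μ L ρ : ℝ) (hμ : 0 < μ) (hμL : μ ≤ L) (hρ : 0 < ρ)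
    (hsc : StrongConvexOn Set.univ μ df) (hsm : IsSmoothFn L df)
    (hconv : ConvexOn ℝ Set.univ dh) (hlsc : LowerSemicontinuous dh)
    (Pf Ph : EuclideanSpace ℝ (Fin p) → EuclideanSpace ℝ (Fin p))
    (hPf : IsProxOf ρ df Pf) (hPh : IsProxOf ρ dh Ph)
    -- the Peaceman–Rachford operator T = refl_{ρ d_h} ∘ refl_{ρ d_f}
    (T : EuclideanSpace ℝ (Fin p) → EuclideanSpace ℝ (Fin p))
    (hT : ∀ z, T z = 2 • Ph (2 • Pf z - z) - (2 • Pf z - z)) :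
    LipschitzWith (max (|1 - ρ * L| / (1 + ρ * L)) (|1 - ρ * μ| / (1 + ρ * μ))).toNNReal T ∧
    max (|1 - ρ * L| / (1 + ρ * L)) (|1 - ρ * μ| / (1 + ρ * μ)) < 1 := by
  obtain ⟨f', hf', hlipf⟩ := hsm
  set lam := max (|1 - ρ * L| / (1 + ρ * L)) (|1 - ρ * μ| / (1 + ρ * μ)) with hlamdef
  have hLpos : 0 < L := lt_of_lt_of_le hμ hμL
  have h1L : 0 < 1 + ρ * L := by positivity
  have h1μ : 0 < 1 + ρ * μ := by positivity
  have hlam0 : 0 ≤ lam := le_trans (by positivity) (le_max_left _ _)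
  have hlt1 : lam < 1 := by
    apply max_lt
    · rw [div_lt_one h1L, abs_lt]
      constructor <;> nlinarith [mul_pos hρ hLpos]
    · rw [div_lt_one h1μ, abs_lt]
      constructor <;> nlinarith [mul_pos hρ hμ]
  have hgeμ : |1 - ρ * μ| ≤ lam * (1 + ρ * μ) := (div_le_iff₀ h1μ).mp (le_max_right _ _)
  have hgeL : |1 - ρ * L| ≤ lam * (1 + ρ * L) := (div_le_iff₀ h1L).mp (le_max_left _ _)
  have h1 : (1 - ρ*μ)^2 ≤ lam^2 * (1 + ρ*μ)^2 := by
    calc (1 - ρ*μ)^2 = |1 - ρ*μ|^2 := (sq_abs _).symm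
      _ ≤ (lam * (1 + ρ*μ))^2 := pow_le_pow_left₀ (abs_nonneg _) hgeμ 2
      _ = lam^2 * (1 + ρ*μ)^2 := by ring
  have h2 : (1 - ρ*L)^2 ≤ lam^2 * (1 + ρ*L)^2 := by
    calc (1 - ρ*L)^2 = |1 - ρ*L|^2 := (sq_abs _).symm
      _ ≤ (lam * (1 + ρ*L))^2 := pow_le_pow_left₀ (abs_nonneg _) hgeL 2
      _ = lam^2 * (1 + ρ*L)^2 := by ring
  have hlipf' : ∀ a b : EuclideanSpace ℝ (Fin p), ‖f' a - f' b‖ ≤ L * ‖a - b‖ := by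
    intro a b
    have := hlipf.dist_le_mul a b
    rwa [dist_eq_norm, dist_eq_norm, Real.coe_toNNReal L hLpos.le] at this
  refine ⟨?_, hlt1⟩
  apply LipschitzWith.of_dist_le_mul
  intro z w
  rw [Real.coe_toNNReal _ hlam0, dist_eq_norm, dist_eq_norm]
  set u := Pf z - Pf w with hu
  set d := f' (Pf z) - f' (Pf w) with hd
  have hz := PR.prox_grad_eq hf' hρ hPf z
  have hw := PR.prox_grad_eq hf' hρ hPf w
  have hzw : z - w = u + ρ • d := by
    have h : z - w = (Pf z + ρ • f' (Pf z)) - (Pf w + ρ • f' (Pf w)) := by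
      rw [← hz, ← hw]
    rw [h, hu, hd]; module
  have harg : (2 • Pf z - z) - (2 • Pf w - w) = u - ρ • d := by
    have h : (2 • Pf z - z) - (2 • Pf w - w) = (2:ℝ) • u - (z - w) := by
      rw [hu]; push_cast; module
    rw [h, hzw]; module
  -- contraction of the f-reflection
  set a := ‖u‖^2 with ha
  set b := ‖d‖^2 with hb
  set s : ℝ := inner ℝ u d with hs
  have hC := PR.cocoercive hf' hμ hμL hsc hlipf' (Pf z) (Pf w)
  rw [← hd, ← hu] at hC
  have hCs : b + μ * L * a ≤ (L + μ) * s := by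
    rw [hs, real_inner_comm]
    rw [ha, hb]
    exact hC
  have hcs : s ^ 2 ≤ a * b := by
    have h := abs_real_inner_le_norm u d
    calc s^2 = |s|^2 := (sq_abs _).symm
      _ ≤ (‖u‖ * ‖d‖)^2 := pow_le_pow_left₀ (abs_nonneg _) h 2
      _ = a * b := by rw [ha, hb]; ring
  have hsL : s ≤ L * a := by
    have h := real_inner_le_norm u d
    have h2' := hlipf' (Pf z) (Pf w)
    rw [← hd, ← hu] at h2'
    nlinarith [norm_nonneg u, norm_nonneg d]
  have hkey := PR.key_alg a b s μ L ρ lam (by positivity) hρ hμ hμL hCs hcs hsL h1 h2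
    hlt1.le hlam0
  have hminus : ‖u - ρ • d‖^2 = a - 2*ρ*s + ρ^2*b := by
    rw [norm_sub_sq_real, real_inner_smul_right, norm_smul]
    rw [ha, hb, hs]
    simp [mul_pow, abs_of_pos hρ]
    ring
  have hplus : ‖u + ρ • d‖^2 = a + 2*ρ*s + ρ^2*b := by
    rw [norm_add_sq_real, real_inner_smul_right, norm_smul]
    rw [ha, hb, hs]
    simp [mul_pow, abs_of_pos hρ]
    ring
  have hcontr : ‖u - ρ • d‖ ≤ lam * ‖u + ρ • d‖ := by
    have hsq : ‖u - ρ • d‖^2 ≤ (lam * ‖u + ρ • d‖)^2 := by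
      rw [hminus]
      calc a - 2*ρ*s + ρ^2*b ≤ lam^2 * (a + 2*ρ*s + ρ^2*b) := hkey
        _ = (lam * ‖u + ρ • d‖)^2 := by rw [← hplus]; ring
    exact (pow_le_pow_iff_left₀ (norm_nonneg _) (by positivity) two_ne_zero).mp hsq
  -- assemble
  have hne := PR.refl_nonexpansive hconv hρ hPh (2 • Pf z - z) (2 • Pf w - w)
  calc ‖T z - T w‖
      = ‖(2 • Ph (2 • Pf z - z) - (2 • Pf z - z)) - (2 • Ph (2 • Pf w - w) - (2 • Pf w - w))‖ := by
        rw [hT z, hT w]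
    _ ≤ ‖(2 • Pf z - z) - (2 • Pf w - w)‖ := hne
    _ = ‖u - ρ • d‖ := by rw [harg]
    _ ≤ lam * ‖u + ρ • d‖ := hcontr
    _ = lam * ‖z - w‖ := by rw [← hzw]
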